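/- Let p be an odd prime and regard γ_p = ∑_{j=1}^{p-1} j^{-1}·X^j as a polynomial in 𝔽_p[X]. Its formal derivative equals 1 + X + X² + ⋯ + X^{p−2}; consequently, every c ∈ 𝔽_p with c ≠ 0, c ≠ 1 and γ_p(c) = 0 is a root of γ_p of multiplicity at least two, i.e., (X − c)² divides γ_p in 𝔽_p[X]. -/

import Mathlib

/-- The Mirimanoff polynomial γ_p = ∑_{j=1}^{p-1} j⁻¹·X^j ∈ 𝔽_p[X]. -/
noncomputable def mirimanoffPoly (p : ℕ) : Polynomial (ZMod p) :=
  ∑ j ∈ Finset.Icc 1 (p - 1), Polynomial.C ((j : ZMod p)⁻¹) * Polynomial.X ^ j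

theorem mirimanoffPoly_derivative_and_double_roots (p : ℕ) (hp : p.Prime) (hodd : Odd p) :
    Polynomial.derivative (mirimanoffPoly p) =
      ∑ i ∈ Finset.range (p - 1), Polynomial.X ^ i ∧
    ∀ c : ZMod p, c ≠ 0 → c ≠ 1 → (mirimanoffPoly p).eval c = 0 →
      (Polynomial.X - Polynomial.C c) ^ 2 ∣ mirimanoffPoly p := by
  haveI : Fact p.Prime := ⟨hp⟩
  have hderiv : Polynomial.derivative (mirimanoffPoly p) =
      ∑ i ∈ Finset.range (p - 1), Polynomial.X ^ i := by
    unfold mirimanoffPoly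
    rw [map_sum]
    have hterm : ∀ j ∈ Finset.Icc 1 (p - 1),
        Polynomial.derivative (Polynomial.C ((j : ZMod p)⁻¹) * Polynomial.X ^ j)
          = Polynomial.X ^ (j - 1) := by
      intro j hj
      rw [Finset.mem_Icc] at hj
      have hjne : (j : ZMod p) ≠ 0 := by
        rw [Ne, ZMod.natCast_eq_zero_iff]
        intro hdvd
        have := Nat.le_of_dvd (by omega) hdvd
        have : j ≤ p - 1 := hj.2
        omega
      rw [Polynomial.derivative_C_mul, Polynomial.derivative_X_pow,
        ← mul_assoc, ← map_mul, inv_mul_cancel₀ hjne, map_one, one_mul]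
    rw [Finset.sum_congr rfl hterm]
    apply Finset.sum_nbij' (fun j => j - 1) (fun i => i + 1) <;>
      simp +contextual [Finset.mem_Icc, Finset.mem_range] <;> omega
  refine ⟨hderiv, fun c hc0 hc1 hroot => ?_⟩
  have hne : mirimanoffPoly p ≠ 0 := by
    intro h
    have := hderiv
    rw [h, map_zero] at this
    have h0 : (0 : Polynomial (ZMod p)).coeff 0 =
        (∑ i ∈ Finset.range (p - 1), (Polynomial.X : Polynomial (ZMod p)) ^ i).coeff 0 := by
      rw [← this]
    have h2 : 2 ≤ p := hp.two_le
    simp [Polynomial.coeff_zero, Polynomial.finset_sum_coeff, Polynomial.coeff_X_pow,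
      Finset.sum_ite_eq'] at h0
    omega
  have hderiv_root : (Polynomial.derivative (mirimanoffPoly p)).IsRoot c := by
    rw [hderiv]
    unfold Polynomial.IsRoot
    rw [Polynomial.eval_finset_sum]
    simp only [Polynomial.eval_pow, Polynomial.eval_X]
    rw [geom_sum_eq hc1, ZMod.pow_card_sub_one_eq_one hc0, sub_self, zero_div]
  have hmult : 1 < (mirimanoffPoly p).rootMultiplicity c :=
    (Polynomial.one_lt_rootMultiplicity_iff_isRoot hne).2 ⟨hroot, hderiv_root⟩
  calc (Polynomial.X - Polynomial.C c) ^ 2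
      ∣ (Polynomial.X - Polynomial.C c) ^ (mirimanoffPoly p).rootMultiplicity c :=
        pow_dvd_pow _ (by omega)
    _ ∣ mirimanoffPoly p := Polynomial.pow_rootMultiplicity_dvd _ _
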